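/- Let A : X → Y be a bounded linear operator between normed spaces, F : X → (-∞,∞] the convex indicator function of a nonempty closed convex set K ⊂ X, and G : Y → ℝ a continuous convex function. Then sup_{φ∈X} (-F(φ) - G(Aφ)) = min_{w∈Y'} (F*(A*w) + G*(-w)), i.e., strong Fenchel–Rockafellar duality holds and the dual minimum is attained whenever the common value is finite. -/

import Mathlib

open NormedSpace Classical

open Set

lemma sep_aux {X Y : Type*} [NormedAddCommGroup X] [NormedSpace ℝ X]
    [NormedAddCommGroup Y] [NormedSpace ℝ Y]
    (A : X →L[ℝ] Y) (K : Set X) (hKne : K.Nonempty) (hKconv : Convex ℝ K)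
    (G : Y → ℝ) (hGcont : Continuous G) (hGconv : ConvexOn ℝ Set.univ G)
    (M : ℝ) (hM : ∀ φ ∈ K, M ≤ G (A φ)) :
    ∃ (w : Y →L[ℝ] ℝ) (u' : ℝ),
      (∀ y, w y - G y ≤ u') ∧ (∀ φ ∈ K, u' + M ≤ w (A φ)) := by
  obtain ⟨φ₀, hφ₀⟩ := hKne
  set E : Set (Y × ℝ) := {p | p.1 ∈ Set.univ ∧ G p.1 < p.2} with hE
  have hEo : IsOpen E := by
    have : E = {p : Y × ℝ | G p.1 < p.2} := by ext p; simp [hE]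
    rw [this]
    exact isOpen_lt (hGcont.comp continuous_fst) continuous_snd
  have hEc : Convex ℝ E := hGconv.convex_strict_epigraph
  set D : Set (Y × ℝ) := (A '' K) ×ˢ Iic M with hD
  have hDc : Convex ℝ D :=
    ((hKconv.linear_image (A : X →ₗ[ℝ] Y))).prod (convex_Iic M)
  have hdisj : Disjoint E D := by
    rw [Set.disjoint_left]
    rintro ⟨y, t⟩ ⟨-, hlt⟩ ⟨⟨φ, hφ, rfl⟩, ht⟩
    have h1 : M ≤ G (A φ) := hM φ hφ
    simp only [Set.mem_setOf_eq] at hlt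
    have h2 : G (A φ) < t := hlt
    have h3 : t ≤ M := ht
    linarith
  obtain ⟨f, u, hfE, hfD⟩ := geometric_hahn_banach_open hEc hEo hDc hdisj
  set s₀ : ℝ := f (0, 1) with hs₀
  have hdecomp : ∀ (y : Y) (t : ℝ), f (y, t) = f (y, 0) + t * s₀ := by
    intro y t
    have h1 : (y, t) = (y, 0) + t • ((0 : Y), (1 : ℝ)) := by
      simp [Prod.ext_iff]
    rw [h1, map_add, map_smul, smul_eq_mul]
  have hEineq : ∀ (y : Y) (t : ℝ), G y < t → f (y, 0) + t * s₀ < u := by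
    intro y t h
    have := hfE (y, t) ⟨mem_univ _, h⟩
    rwa [hdecomp] at this
  have hDineq : ∀ φ ∈ K, ∀ t ≤ M, u ≤ f (A φ, 0) + t * s₀ := by
    intro φ hφ t ht
    have := hfD (A φ, t) ⟨⟨φ, hφ, rfl⟩, ht⟩
    rwa [hdecomp] at this
  have hf00 : f ((0 : Y), (0 : ℝ)) = 0 := by
    have : ((0 : Y), (0 : ℝ)) = (0 : Y × ℝ) := rfl
    rw [this, map_zero]
  have hs0le : s₀ ≤ 0 := by
    by_contra h
    push_neg at h
    set t := max (G 0 + 1) ((u + 1) / s₀) with htdef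
    have h1 : G 0 < t := lt_of_lt_of_le (by linarith) (le_max_left _ _)
    have h2 := hEineq 0 t h1
    rw [hf00] at h2
    have h3 : (u + 1) / s₀ ≤ t := le_max_right _ _
    have h4 : (u + 1) / s₀ * s₀ ≤ t * s₀ := mul_le_mul_of_nonneg_right h3 h.le
    rw [div_mul_cancel₀ _ (ne_of_gt h)] at h4
    linarith
  have hs0ne : s₀ ≠ 0 := by
    intro h0
    have hy0 : ∀ y : Y, f (y, 0) < u := by
      intro y
      have := hEineq y (G y + 1) (by linarith)
      rw [h0] at this; linarith
    have hzero : ∀ y : Y, f (y, 0) = 0 := by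
      intro y
      by_contra hne
      have key : ∀ c : ℝ, c * f (y, 0) < u := by
        intro c
        have : f (c • y, 0) < u := hy0 _
        have h2 : (c • y, (0 : ℝ)) = c • (y, (0 : ℝ)) := by simp [Prod.ext_iff]
        rw [h2, map_smul, smul_eq_mul] at this
        exact this
      have := key ((u + 1) / f (y, 0))
      rw [div_mul_cancel₀ _ hne] at this
      have hu : 0 < u := by
        have := hy0 0; rw [hf00] at this
        -- 0 < u from f(0,0)=0 < u
        linarith
      linarith
    have h1 := hDineq φ₀ hφ₀ M le_rfl
    rw [hzero, h0] at h1
    have h2 := hy0 0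
    rw [hf00] at h2
    linarith
  have hs0 : s₀ < 0 := lt_of_le_of_ne hs0le hs0ne
  have hpos : 0 < -s₀ := by linarith
  -- key real inequality on E side with limit
  have hElim : ∀ y : Y, f (y, 0) + G y * s₀ ≤ u := by
    intro y
    by_contra h
    push_neg at h
    set ε := (f (y, 0) + G y * s₀ - u) / (-s₀) with hε
    have hεpos : 0 < ε := div_pos (by linarith) hpos
    have := hEineq y (G y + ε) (by linarith)
    have hcalc : (G y + ε) * s₀ = G y * s₀ - ε * (-s₀) := by ring
    rw [hcalc] at this
    have : f (y, 0) + G y * s₀ - ε * (-s₀) < u := by linarith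
    rw [hε, div_mul_cancel₀ _ (ne_of_gt hpos)] at this
    linarith
  refine ⟨(-s₀)⁻¹ • (f.comp (ContinuousLinearMap.inl ℝ Y ℝ)), u / (-s₀), ?_, ?_⟩
  · intro y
    have h1 := hElim y
    have h2 : ((-s₀)⁻¹ • (f.comp (ContinuousLinearMap.inl ℝ Y ℝ))) y
        = (-s₀)⁻¹ * f (y, 0) := by
      simp [ContinuousLinearMap.inl_apply]
    rw [h2, div_eq_inv_mul, ← sub_nonneg]
    have : (-s₀)⁻¹ * u - ((-s₀)⁻¹ * f (y, 0) - G y)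
        = (-s₀)⁻¹ * ((u - (f (y, 0) + G y * s₀))) := by
      field_simp
      ring
    rw [this]
    exact mul_nonneg (inv_nonneg.2 hpos.le) (by linarith)
  · intro φ hφ
    have h1 := hDineq φ hφ M le_rfl
    have h2 : ((-s₀)⁻¹ • (f.comp (ContinuousLinearMap.inl ℝ Y ℝ))) (A φ)
        = (-s₀)⁻¹ * f (A φ, 0) := by
      simp [ContinuousLinearMap.inl_apply]
    rw [h2, div_eq_inv_mul, ← sub_nonneg]
    have : (-s₀)⁻¹ * f (A φ, 0) - ((-s₀)⁻¹ * u + M)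
        = (-s₀)⁻¹ * ((f (A φ, 0) + M * s₀) - u) := by
      field_simp
      ring
    rw [this]
    exact mul_nonneg (inv_nonneg.2 hpos.le) (by linarith)

/-- Rockafellar–Fenchel strong duality: for a bounded linear operator `A`, the
indicator `F` of a nonempty closed convex set and a continuous convex `G`,
`sup (-F - G∘A) = min (F*(A*·) + G*(-·))`, the dual minimum being attained
whenever the common value is finite. -/
theorem fenchel_rockafellar_duality
    {X Y : Type*} [NormedAddCommGroup X] [NormedSpace ℝ X]
    [NormedAddCommGroup Y] [NormedSpace ℝ Y]
    (A : X →L[ℝ] Y)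
    (K : Set X) (hKne : K.Nonempty) (hKcl : IsClosed K) (hKconv : Convex ℝ K)
    (G : Y → ℝ) (hGcont : Continuous G) (hGconv : ConvexOn ℝ Set.univ G)
    (F : X → EReal) (hF : ∀ φ, F φ = if φ ∈ K then (0 : EReal) else (⊤ : EReal))
    (Fstar : StrongDual ℝ X → EReal)
    (hFstar : ∀ ξ, Fstar ξ = sSup {r : EReal | ∃ φ : X, r = (ξ φ : EReal) - F φ})
    (Gstar : StrongDual ℝ Y → EReal)
    (hGstar : ∀ w, Gstar w = sSup {r : EReal | ∃ y : Y, r = (w y : EReal) - (G y : EReal)}) :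
    sSup {r : EReal | ∃ φ : X, r = -F φ - (G (A φ) : EReal)}
      = sInf {r : EReal | ∃ w : StrongDual ℝ Y, r = Fstar (w.comp A) + Gstar (-w)} ∧
    (sSup {r : EReal | ∃ φ : X, r = -F φ - (G (A φ) : EReal)} ≠ ⊥ →
     sSup {r : EReal | ∃ φ : X, r = -F φ - (G (A φ) : EReal)} ≠ ⊤ →
     ∃ w : StrongDual ℝ Y, Fstar (w.comp A) + Gstar (-w)
        = sSup {r : EReal | ∃ φ : X, r = -F φ - (G (A φ) : EReal)}) := by
  obtain ⟨φ₀, hφ₀⟩ := hKne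
  set P : Set EReal := {r : EReal | ∃ φ : X, r = -F φ - (G (A φ) : EReal)} with hP
  set S : EReal := sSup P with hS
  -- computation of primal elements
  have hPel : ∀ φ ∈ K, (-F φ - (G (A φ) : EReal)) = ((-(G (A φ)) : ℝ) : EReal) := by
    intro φ hφ
    rw [hF, if_pos hφ, neg_zero, zero_sub, EReal.coe_neg]
  have hPel' : ∀ φ, φ ∉ K → (-F φ - (G (A φ) : EReal)) = (⊥ : EReal) := by
    intro φ hφ
    rw [hF, if_neg hφ, EReal.neg_top, EReal.bot_sub]
  have hmem : ∀ φ ∈ K, ((-(G (A φ)) : ℝ) : EReal) ∈ P := by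
    intro φ hφ
    exact ⟨φ, (hPel φ hφ).symm⟩
  have hSbot : S ≠ ⊥ := by
    intro h
    have := le_sSup (hmem φ₀ hφ₀)
    rw [← hS, h, le_bot_iff] at this
    exact EReal.coe_ne_bot _ this
  -- weak duality
  have weak : ∀ w : StrongDual ℝ Y, S ≤ Fstar (w.comp A) + Gstar (-w) := by
    intro w
    apply sSup_le
    rintro r ⟨φ, rfl⟩
    by_cases hφ : φ ∈ K
    · rw [hPel φ hφ]
      have h1 : ((w (A φ) : ℝ) : EReal) ≤ Fstar (w.comp A) := by
        rw [hFstar]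
        apply le_sSup
        refine ⟨φ, ?_⟩
        rw [hF, if_pos hφ, ContinuousLinearMap.comp_apply, sub_zero]
      have h2 : ((-(w (A φ)) - G (A φ) : ℝ) : EReal) ≤ Gstar (-w) := by
        rw [hGstar]
        apply le_sSup
        refine ⟨A φ, ?_⟩
        rw [ContinuousLinearMap.neg_apply, EReal.coe_sub, EReal.coe_neg]
      calc ((-(G (A φ)) : ℝ) : EReal)
          = ((w (A φ) : ℝ) : EReal) + ((-(w (A φ)) - G (A φ) : ℝ) : EReal) := by
            rw [← EReal.coe_add, EReal.coe_eq_coe_iff]; ring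
        _ ≤ Fstar (w.comp A) + Gstar (-w) := add_le_add h1 h2
    · rw [hPel' φ hφ]; exact bot_le
  by_cases hStop : S = ⊤
  · constructor
    · apply le_antisymm
      · apply le_sInf
        rintro r ⟨w, rfl⟩
        exact weak w
      · rw [hStop]; exact le_top
    · intro _ h; exact absurd hStop h
  · -- finite case
    lift S to ℝ using ⟨hStop, hSbot⟩ with s hs
    set M : ℝ := -s with hM
    have hMle : ∀ φ ∈ K, M ≤ G (A φ) := by
      intro φ hφ
      have := le_sSup (hmem φ hφ)
      rw [← hS, EReal.coe_le_coe_iff] at this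
      rw [hM]
      linarith
    obtain ⟨w, u', hw1, hw2⟩ := sep_aux A K ⟨φ₀, hφ₀⟩ hKconv G hGcont hGconv M hMle
    set w' : StrongDual ℝ Y := -w with hw'
    have hFs : Fstar (w'.comp A) ≤ ((-(u' + M) : ℝ) : EReal) := by
      rw [hFstar]
      apply sSup_le
      rintro r ⟨φ, rfl⟩
      by_cases hφ : φ ∈ K
      · rw [hF, if_pos hφ, sub_zero]
        rw [EReal.coe_le_coe_iff]
        have := hw2 φ hφ
        simp only [hw', ContinuousLinearMap.comp_apply, ContinuousLinearMap.neg_apply]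
        linarith
      · rw [hF, if_neg hφ, EReal.sub_top]
        exact bot_le
    have hGs : Gstar (-w') ≤ ((u' : ℝ) : EReal) := by
      rw [hGstar]
      apply sSup_le
      rintro r ⟨y, rfl⟩
      have := hw1 y
      rw [← EReal.coe_sub, EReal.coe_le_coe_iff]
      simp only [hw', neg_neg]
      linarith
    have hdualle : Fstar (w'.comp A) + Gstar (-w') ≤ (s : EReal) := by
      calc Fstar (w'.comp A) + Gstar (-w')
          ≤ ((-(u' + M) : ℝ) : EReal) + ((u' : ℝ) : EReal) := add_le_add hFs hGs
        _ = (s : EReal) := by rw [← EReal.coe_add]; norm_num [hM]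
    have heq : Fstar (w'.comp A) + Gstar (-w') = (s : EReal) := by
      apply le_antisymm hdualle
      exact weak w'
    constructor
    · apply le_antisymm
      · apply le_sInf
        rintro r ⟨v, rfl⟩
        exact weak v
      · rw [← heq]
        exact sInf_le ⟨w', rfl⟩
    · intro _ _
      exact ⟨w', heq⟩
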